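/- Fix real numbers v with 0 < v < 1/2 and α > 0, and define W₂(y) = ∫_{√(y² + α² − 2v) − α}^{y} (αx + v − (y² − x²)/2) dx for y ∈ [√(2v), 1]. Then W₂′(y) = y(√(α² + y² − 2v) − y) + v and W₂″(y) = (y − √(α² + y² − 2v))² / √(α² + y² − 2v) ≥ 0; in particular W₂ is convex on [√(2v), 1]. -/

import Mathlib

/-- With 0 < v < 1/2, α > 0, and
W₂(y) = ∫_{√(y²+α²−2v)−α}^{y} (αx + v − (y² − x²)/2) dx, for every
y ∈ [√(2v), 1] we have W₂′(y) = y(√(α² + y² − 2v) − y) + v and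
W₂″(y) = (y − √(α² + y² − 2v))²/√(α² + y² − 2v) ≥ 0; in particular W₂ is
convex on [√(2v), 1]. -/
theorem stmt_15 (v α : ℝ) (hv : 0 < v ∧ v < 1 / 2) (hα : 0 < α)
    (W : ℝ → ℝ)
    (hW : ∀ y, W y = ∫ x in (Real.sqrt (y ^ 2 + α ^ 2 - 2 * v) - α)..y,
      (α * x + v - (y ^ 2 - x ^ 2) / 2)) :
    (∀ y ∈ Set.Icc (Real.sqrt (2 * v)) 1,
      deriv W y = y * (Real.sqrt (α ^ 2 + y ^ 2 - 2 * v) - y) + v ∧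
      deriv (deriv W) y =
        (y - Real.sqrt (α ^ 2 + y ^ 2 - 2 * v)) ^ 2
          / Real.sqrt (α ^ 2 + y ^ 2 - 2 * v) ∧
      0 ≤ deriv (deriv W) y) ∧
    ConvexOn ℝ (Set.Icc (Real.sqrt (2 * v)) 1) W := by
  obtain ⟨hv0, hv1⟩ := hv
  set s : ℝ → ℝ := fun y => Real.sqrt (y ^ 2 + α ^ 2 - 2 * v) with hs_def
  have hsymm : ∀ y : ℝ, Real.sqrt (α ^ 2 + y ^ 2 - 2 * v) = s y := by
    intro y
    simp only [hs_def]
    congr 1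
    ring
  -- closed form for W
  have hWg : W = fun y => (α * y ^ 2 / 2 + v * y - y ^ 2 * y / 2 + y ^ 3 / 6) -
      (α * (s y - α) ^ 2 / 2 + v * (s y - α) - y ^ 2 * (s y - α) / 2 + (s y - α) ^ 3 / 6) := by
    funext y
    rw [hW y]
    rw [intervalIntegral.integral_eq_sub_of_hasDerivAt
      (f := fun x => α * x ^ 2 / 2 + v * x - y ^ 2 * x / 2 + x ^ 3 / 6)
      (fun x _ => by
        have h1 := ((((hasDerivAt_pow 2 x).const_mul α).div_const 2).add
            ((hasDerivAt_id' x).const_mul v)).sub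
            (((hasDerivAt_id' x).const_mul (y ^ 2)).div_const 2) |>.add
            ((hasDerivAt_pow 3 x).div_const 6)
        refine h1.congr_deriv ?_
        symm
        push_cast
        norm_num
        ring)
      ((Continuous.intervalIntegrable (by fun_prop) _ _))]
  -- positivity of the argument of the sqrt on the relevant set
  have hpos : ∀ y : ℝ, Real.sqrt (2 * v) ≤ y → 0 < y ^ 2 + α ^ 2 - 2 * v := by
    intro y hy
    have h0 : (0 : ℝ) ≤ 2 * v := by positivity
    have h1 : 2 * v = Real.sqrt (2 * v) ^ 2 := (Real.sq_sqrt h0).symm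
    have h2 : Real.sqrt (2 * v) ^ 2 ≤ y ^ 2 :=
      pow_le_pow_left₀ (Real.sqrt_nonneg _) hy 2
    nlinarith [sq_nonneg α]
  -- first derivative
  have key : ∀ y : ℝ, 0 < y ^ 2 + α ^ 2 - 2 * v →
      HasDerivAt W (y * s y - y ^ 2 + v) y := by
    intro y hy
    have hs0 : (0 : ℝ) < s y := Real.sqrt_pos.mpr hy
    have hsq : s y ^ 2 = y ^ 2 + α ^ 2 - 2 * v := Real.sq_sqrt hy.le
    have harg : HasDerivAt (fun y : ℝ => y ^ 2 + α ^ 2 - 2 * v) (2 * y) y := by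
      simpa using ((hasDerivAt_pow 2 y).add_const (α ^ 2)).sub_const (2 * v)
    have hds : HasDerivAt s (1 / (2 * s y) * (2 * y)) y := by
      have h2 := (Real.hasDerivAt_sqrt (ne_of_gt hy)).comp y harg
      simpa [hs_def, Function.comp_def] using h2
    set d : ℝ := 1 / (2 * s y) * (2 * y) with hd_def
    rw [hWg]
    have H := ((((((hasDerivAt_pow 2 y).const_mul α).div_const 2).add
        ((hasDerivAt_id' y).const_mul v)).sub
        (((hasDerivAt_pow 2 y).mul (hasDerivAt_id' y)).div_const 2)).add
        ((hasDerivAt_pow 3 y).div_const 6)).sub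
        (((((((hds.sub_const α).pow 2).const_mul α).div_const 2).add
        ((hds.sub_const α).const_mul v)).sub
        (((hasDerivAt_pow 2 y).mul (hds.sub_const α)).div_const 2)).add
        (((hds.sub_const α).pow 3).div_const 6))
    refine H.congr_deriv ?_
    symm
    push_cast
    linear_combination (d / 2) * hsq
  -- second derivative
  have key2 : ∀ y : ℝ, 0 < y ^ 2 + α ^ 2 - 2 * v →
      HasDerivAt (fun z => z * s z - z ^ 2 + v) ((y - s y) ^ 2 / s y) y := by
    intro y hy
    have hs0 : (0 : ℝ) < s y := Real.sqrt_pos.mpr hy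
    have harg : HasDerivAt (fun y : ℝ => y ^ 2 + α ^ 2 - 2 * v) (2 * y) y := by
      simpa using ((hasDerivAt_pow 2 y).add_const (α ^ 2)).sub_const (2 * v)
    have hds : HasDerivAt s (1 / (2 * s y) * (2 * y)) y := by
      have h2 := (Real.hasDerivAt_sqrt (ne_of_gt hy)).comp y harg
      simpa [hs_def, Function.comp_def] using h2
    have H := (((hasDerivAt_id' y).mul hds).sub (hasDerivAt_pow 2 y)).add_const v
    refine H.congr_deriv ?_
    symm
    have hs0' : s y ≠ 0 := ne_of_gt hs0
    push_cast
    norm_num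
    field_simp
    ring
  have hUopen : IsOpen {z : ℝ | 0 < z ^ 2 + α ^ 2 - 2 * v} :=
    isOpen_lt continuous_const (by fun_prop)
  have hderivW : ∀ y : ℝ, 0 < y ^ 2 + α ^ 2 - 2 * v →
      deriv W y = y * s y - y ^ 2 + v := fun y hy => (key y hy).deriv
  have hderiv2 : ∀ y : ℝ, 0 < y ^ 2 + α ^ 2 - 2 * v →
      deriv (deriv W) y = (y - s y) ^ 2 / s y := by
    intro y hy
    have hev : deriv W =ᶠ[nhds y] fun z => z * s z - z ^ 2 + v := by
      filter_upwards [hUopen.mem_nhds hy] with z hz using hderivW z hz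
    rw [hev.deriv_eq]
    exact (key2 y hy).deriv
  constructor
  · intro y hy
    have hy' : 0 < y ^ 2 + α ^ 2 - 2 * v := hpos y hy.1
    have hs0 : (0 : ℝ) < s y := Real.sqrt_pos.mpr hy'
    refine ⟨?_, ?_, ?_⟩
    · rw [hderivW y hy', hsymm y]; ring
    · rw [hderiv2 y hy', hsymm y]
    · rw [hderiv2 y hy']
      positivity
  · -- convexity
    apply convexOn_of_hasDerivWithinAt2_nonneg (f' := fun z => z * s z - z ^ 2 + v)
      (f'' := fun z => (z - s z) ^ 2 / s z) (convex_Icc _ _)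
    · rw [hWg]
      apply Continuous.continuousOn
      fun_prop
    · intro x hx
      rw [interior_Icc] at hx
      exact (key x (hpos x hx.1.le)).hasDerivWithinAt
    · intro x hx
      rw [interior_Icc] at hx
      exact (key2 x (hpos x hx.1.le)).hasDerivWithinAt
    · intro x hx
      rw [interior_Icc] at hx
      have hs0 : (0 : ℝ) < s x := Real.sqrt_pos.mpr (hpos x hx.1.le)
      positivity
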